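/- Let F be a number field of degree n and p ≥ 5 a prime such that gcd(n, (p-1)/2) = 1 and p is totally ramified in F. Then the unit equation λ + μ = 1 has no solutions with λ, μ ∈ O_F^×. -/

import Mathlib

open NumberField Polynomial Matrix Module

lemma aux_norm_congr (F : Type*) [Field F] [NumberField F] (n : ℕ)
    (hn : Module.finrank ℚ F = n) (p : ℕ) (hp : p.Prime)
    (𝔭 : Ideal (𝓞 F)) (hram : Ideal.span {(p : 𝓞 F)} = 𝔭 ^ n)
    (x : 𝓞 F) (a : ℤ) (hx : x - (a : 𝓞 F) ∈ 𝔭) :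
    ((Algebra.norm ℤ x : ℤ) : ZMod p) = (a : ZMod p) ^ n := by
  classical
  haveI : Fact p.Prime := ⟨hp⟩
  let b := Module.Free.chooseBasis ℤ (𝓞 F)
  have hcard : Fintype.card (Module.Free.ChooseBasisIndex ℤ (𝓞 F)) = n := by
    rw [← Module.finrank_eq_card_chooseBasisIndex, RingOfIntegers.rank, hn]
  set ε : 𝓞 F := (a : 𝓞 F) - x with hε
  have hεmem : ε ∈ 𝔭 := by
    have := 𝔭.neg_mem hx
    simpa [hε, neg_sub] using this
  set A : Matrix _ _ ℤ := Algebra.leftMulMatrix b ε with hA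
  have hxeq : x = algebraMap ℤ (𝓞 F) a - ε := by simp [hε]
  have hnorm : Algebra.norm ℤ x = (A.charpoly).eval a := by
    rw [Algebra.norm_eq_matrix_det b, hxeq, map_sub, AlgHom.commutes]
    rw [Matrix.charpoly, eval_det, matPolyEquiv_charmatrix]
    simp [Matrix.scalar, algebraMap, hA]
  have hdvd : (p : 𝓞 F) ∣ ε ^ n := by
    rw [← Ideal.mem_span_singleton, hram]
    exact Ideal.pow_mem_pow hεmem n
  obtain ⟨t, ht⟩ := hdvd
  have h1 : A ^ n = Algebra.leftMulMatrix b (ε ^ n) := by rw [map_pow]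
  have h3 : (p : 𝓞 F) = algebraMap ℤ (𝓞 F) (p : ℤ) := by push_cast; rfl
  have hnil : IsNilpotent (A.map (Int.castRingHom (ZMod p))) := by
    refine ⟨n, ?_⟩
    have hmm : A.map (Int.castRingHom (ZMod p)) = (Int.castRingHom (ZMod p)).mapMatrix A := rfl
    rw [hmm, ← map_pow, h1, ht, h3, _root_.map_mul (Algebra.leftMulMatrix b),
      AlgHom.commutes (Algebra.leftMulMatrix b) (p : ℤ),
      _root_.map_mul ((Int.castRingHom (ZMod p)).mapMatrix)]
    have hz : (Int.castRingHom (ZMod p)).mapMatrix (algebraMap ℤ (Matrix (Module.Free.ChooseBasisIndex ℤ (𝓞 F)) (Module.Free.ChooseBasisIndex ℤ (𝓞 F)) ℤ) (p:ℤ)) = 0 := by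
      simp [Matrix.algebraMap_eq_diagonal]
    rw [hz, zero_mul]
  have hm : (A.charpoly).map (Int.castRingHom (ZMod p)) = X ^ n := by
    rw [← Matrix.charpoly_map]
    have h0 := IsNilpotent.eq_zero (Matrix.isNilpotent_charpoly_sub_pow_of_isNilpotent hnil)
    rw [sub_eq_zero] at h0
    rw [h0, hcard]
  have hc : ((eval a A.charpoly : ℤ) : ZMod p)
      = eval ((a : ZMod p)) ((A.charpoly).map (Int.castRingHom (ZMod p))) := by
    rw [eval_map, show ((a : ZMod p)) = (Int.castRingHom (ZMod p)) a from rfl]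
    exact (Polynomial.eval₂_at_apply (Int.castRingHom (ZMod p)) a).symm
  rw [hnorm, hc, hm, eval_pow, eval_X]

set_option maxHeartbeats 2000000 in
set_option synthInstance.maxHeartbeats 400000 in
/-- Let `F` be a number field of degree `n` and `p ≥ 5` a prime such
that `gcd(n, (p-1)/2) = 1` and `p` is totally ramified in `F`. Then the unit equation
`λ + μ = 1` has no solutions in units of `𝓞 F`. -/
theorem no_unit_equation_solution_of_totally_ramified
    (F : Type*) [Field F] [NumberField F] (n : ℕ) (hn : Module.finrank ℚ F = n)
    (p : ℕ) (hp : p.Prime) (hp5 : 5 ≤ p)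
    (𝔭 : Ideal (𝓞 F)) (h𝔭 : 𝔭.IsPrime)
    (hram : Ideal.span {(p : 𝓞 F)} = 𝔭 ^ n)
    (hgcd : Nat.gcd n ((p - 1) / 2) = 1) :
    ¬ ∃ lam mu : (𝓞 F)ˣ, (lam : 𝓞 F) + (mu : 𝓞 F) = 1 := by
  classical
  rintro ⟨lam, mu, hsum⟩
  haveI : Fact p.Prime := ⟨hp⟩
  have hn0 : n ≠ 0 := by
    have : 0 < Module.finrank ℚ F := Module.finrank_pos
    omega
  -- p ∈ 𝔭
  have hp𝔭 : (p : 𝓞 F) ∈ 𝔭 := by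
    refine Ideal.pow_le_self hn0 ?_
    rw [← hram]
    exact Ideal.mem_span_singleton_self _
  -- 𝔭 ≠ ⊥
  have h𝔭bot : 𝔭 ≠ ⊥ := by
    intro hb
    rw [hb] at hram
    have : (⊥ : Ideal (𝓞 F)) ^ n = ⊥ := by
      rw [← Ideal.zero_eq_bot, zero_pow hn0]
    rw [this, Ideal.span_singleton_eq_bot] at hram
    exact (Nat.cast_ne_zero.mpr hp.ne_zero : (p : 𝓞 F) ≠ 0) hram
  -- absNorm 𝔭 = p
  have habs : Ideal.absNorm 𝔭 = p := by
    apply Nat.pow_left_injective hn0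
    show Ideal.absNorm 𝔭 ^ n = p ^ n
    have h1 : Ideal.absNorm (Ideal.span {(p : 𝓞 F)}) = p ^ n := by
      rw [Ideal.absNorm_span_singleton]
      have h3 : (p : 𝓞 F) = algebraMap ℤ (𝓞 F) (p : ℤ) := by push_cast; rfl
      rw [h3, Algebra.norm_algebraMap_of_basis (Module.Free.chooseBasis ℤ (𝓞 F)),
        ← Module.finrank_eq_card_chooseBasisIndex, RingOfIntegers.rank, hn]
      push_cast
      simp [Int.natAbs_pow]
    rw [← map_pow, ← hram, h1]
  -- quotient field
  haveI : 𝔭.IsMaximal := h𝔭.isMaximal h𝔭bot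
  haveI : Nontrivial (𝓞 F ⧸ 𝔭) := Ideal.Quotient.nontrivial_iff.mpr h𝔭.ne_top
  have hcardQ : Nat.card (𝓞 F ⧸ 𝔭) = p := by
    rw [← Submodule.cardQuot_apply, ← Ideal.absNorm_apply, habs]
  haveI : Finite (𝓞 F ⧸ 𝔭) := Nat.finite_of_card_ne_zero (by rw [hcardQ]; exact hp.ne_zero)
  haveI : Fintype (𝓞 F ⧸ 𝔭) := Fintype.ofFinite (𝓞 F ⧸ 𝔭)
  -- CharP (𝓞 F ⧸ 𝔭) p
  have hpz : ((p : ℕ) : (𝓞 F ⧸ 𝔭)) = 0 := by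
    rw [show ((p:ℕ) : (𝓞 F ⧸ 𝔭)) = Ideal.Quotient.mk 𝔭 ((p:ℕ) : 𝓞 F) by push_cast; rfl]
    exact Ideal.Quotient.eq_zero_iff_mem.mpr hp𝔭
  have hring : ringChar (𝓞 F ⧸ 𝔭) = p := by
    have hdvd : ringChar (𝓞 F ⧸ 𝔭) ∣ p := (CharP.cast_eq_zero_iff (𝓞 F ⧸ 𝔭) (ringChar (𝓞 F ⧸ 𝔭)) p).mp hpz
    rcases (Nat.Prime.eq_one_or_self_of_dvd hp _ hdvd) with h | h
    · exact absurd h (CharP.ringChar_ne_one)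
    · exact h
  haveI : CharP (𝓞 F ⧸ 𝔭) p := hring ▸ ringChar.charP (𝓞 F ⧸ 𝔭)
  set φ : ZMod p →+* (𝓞 F ⧸ 𝔭) := ZMod.castHom dvd_rfl (𝓞 F ⧸ 𝔭) with hφ
  have hinj : Function.Injective φ := φ.injective
  have hsurj : Function.Surjective φ := by
    have := (Fintype.bijective_iff_injective_and_card φ).mpr
      ⟨hinj, by rw [← Nat.card_eq_fintype_card, ← Nat.card_eq_fintype_card, hcardQ, Nat.card_zmod]⟩
    exact this.2
  -- m : (p-1)/2 and gcd
  have hpodd : Odd p := hp.odd_of_ne_two (by omega)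
  have h2m : 2 * ((p - 1) / 2) = p - 1 := by
    obtain ⟨k, hk⟩ := hpodd
    omega
  have hgcd2 : Nat.gcd (2 * n) (p - 1) = 2 := by
    rw [← h2m, Nat.gcd_mul_left, hgcd, mul_one]
  -- key: residues of units are ±1
  have key : ∀ u : (𝓞 F)ˣ, ∃ a : ZMod p,
      (a = 1 ∨ a = -1) ∧ Ideal.Quotient.mk 𝔭 (u : 𝓞 F) = φ a := by
    intro u
    obtain ⟨a, ha⟩ := hsurj (Ideal.Quotient.mk 𝔭 (u : 𝓞 F))
    obtain ⟨a', ha'⟩ := ZMod.intCast_surjective (n := p) a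
    have hmem : (u : 𝓞 F) - (a' : 𝓞 F) ∈ 𝔭 := by
      rw [← Ideal.Quotient.eq, ← ha, ← ha', map_intCast φ a']
      exact (map_intCast (Ideal.Quotient.mk 𝔭) a').symm
    have hnormcongr := aux_norm_congr F n hn p hp 𝔭 hram (u : 𝓞 F) a' hmem
    have hunit : IsUnit (Algebra.norm ℤ (u : 𝓞 F)) := u.isUnit.map (Algebra.norm ℤ)
    have ha2 : a ^ 2 = 1 := by
      have hpow : a ^ n = 1 ∨ a ^ n = -1 := by
        rcases Int.isUnit_iff.mp hunit with h | h <;>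
          [left; right] <;>
          · rw [← ha', ← hnormcongr, h]; push_cast; ring
      have h2n : a ^ (2 * n) = 1 := by
        rcases hpow with h | h <;> rw [mul_comm, pow_mul, h] <;> ring
      have hne : a ≠ 0 := by
        intro h0
        rcases hpow with h | h <;> rw [h0, zero_pow hn0] at h
        · exact zero_ne_one h
        · have : (1 : ZMod p) = 0 := by
            have := h.symm
            simpa [neg_eq_iff_eq_neg] using congrArg Neg.neg this
          exact one_ne_zero this
      have hdvd2 : orderOf a ∣ 2 := by
        rw [← hgcd2]
        exact Nat.dvd_gcd (orderOf_dvd_iff_pow_eq_one.mpr h2n)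
          (orderOf_dvd_iff_pow_eq_one.mpr (ZMod.pow_card_sub_one_eq_one hne))
      have := orderOf_dvd_iff_pow_eq_one.mp hdvd2
      simpa using this
    refine ⟨a, ?_, ha.symm⟩
    rw [pow_two] at ha2
    exact mul_self_eq_one_iff.mp ha2
  obtain ⟨a, haa, hma⟩ := key lam
  obtain ⟨b, hbb, hmb⟩ := key mu
  have hab : a + b = 1 := by
    apply hinj
    rw [_root_.map_add, ← hma, ← hmb, ← _root_.map_add, hsum, _root_.map_one, _root_.map_one]
  have h3 : ((3 : ℕ) : ZMod p) ≠ 0 := by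
    intro h
    have := (ZMod.natCast_eq_zero_iff 3 p).mp h
    have := Nat.le_of_dvd (by norm_num) this
    omega
  have h1 : ((1 : ℕ) : ZMod p) ≠ 0 := by
    intro h
    have := (ZMod.natCast_eq_zero_iff 1 p).mp h
    have := Nat.le_of_dvd (by norm_num) this
    omega
  rcases haa with rfl | rfl <;> rcases hbb with rfl | rfl
  · apply h1; push_cast; linear_combination hab
  · apply h1; push_cast; linear_combination -hab
  · apply h1; push_cast; linear_combination -hab
  · apply h3; push_cast; linear_combination -hab
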